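/- Decaying coefficients give summable sech-localizations: for ε, δ ∈ (0,1], if a : ℝ → ℝ satisfies |a(x)| + |a'(x)| ≤ δ(1+x²)^{-1} for all x, then ∫_ℝ ‖ψ_z a‖_{H¹(ℝ)} dz ≲ δ, where ψ_z(x) = sech((x-z)/6); the key pointwise step is ∫ |ψ_z(x) a(x)|² dx ≲ δ² ⟨z⟩^{-4}, obtained by partitioning sech² over unit annuli |x - z| ∈ [n, n+1). -/

import Mathlib

open MeasureTheory

/-- The translated weight `ψ_z(x) = sech((x-z)/6)`. -/
noncomputable def psiZ (z x : ℝ) : ℝ := (Real.cosh ((x - z) / 6))⁻¹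

/-- The `H¹(ℝ)` norm of a differentiable function `g` with derivative `g'`:
`(∫ |g|² + |g'|²)^{1/2}`. -/
noncomputable def h1NormOf (g g' : ℝ → ℝ) : ℝ :=
  Real.sqrt (∫ x : ℝ, (g x ^ 2 + g' x ^ 2))

section Auxiliary

open Set

lemma base_integrable : Integrable (fun x : ℝ => Real.exp (-(|x| / 6))) := by
  have h : IntegrableOn (fun x : ℝ => Real.exp (-(|x| / 6))) (Ioi 0) := by
    apply (exp_neg_integrableOn_Ioi 0 (show (0:ℝ) < 1/6 by norm_num)).congr_fun ?_
      measurableSet_Ioi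
    intro x hx
    simp only []
    rw [abs_of_pos hx]
    congr 1
    ring
  have hIic : IntegrableOn (fun x : ℝ => Real.exp (-(|x| / 6))) (Iic 0) := by
    rw [← Measure.map_neg_eq_self (volume : Measure ℝ)]
    have m : MeasurableEmbedding fun x : ℝ => -x := (Homeomorph.neg ℝ).measurableEmbedding
    rw [m.integrableOn_map_iff]
    simp_rw [Function.comp_def, abs_neg, neg_preimage, neg_Iic, neg_zero]
    exact Iff.mpr integrableOn_Ici_iff_integrableOn_Ioi h
  rw [← integrableOn_univ, ← Iic_union_Ioi (a := (0:ℝ))]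
  exact hIic.union h

lemma base_integral : (∫ x : ℝ, Real.exp (-(|x| / 6))) = 12 := by
  rw [show (fun x : ℝ => Real.exp (-(|x| / 6)))
      = (fun x : ℝ => (fun y : ℝ => Real.exp (-(y/6))) |x|) from rfl]
  rw [integral_comp_abs (f := fun y : ℝ => Real.exp (-(y/6)))]
  have h := integral_comp_mul_left_Ioi (fun x : ℝ => Real.exp (-x)) 0
    (show (0:ℝ) < 1/6 by norm_num)
  simp only [mul_zero] at h
  have h2 : (fun x : ℝ => Real.exp (-(x/6))) = (fun x : ℝ => Real.exp (-(1/6 * x))) := by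
    funext x; congr 1; ring
  rw [h2, h, integral_exp_neg_Ioi]
  norm_num

lemma shifted_integrable (z : ℝ) : Integrable (fun x : ℝ => Real.exp (-(|x - z| / 6))) :=
  base_integrable.comp_sub_right z

lemma shifted_integral (z : ℝ) : (∫ x : ℝ, Real.exp (-(|x - z| / 6))) = 12 := by
  rw [show (fun x : ℝ => Real.exp (-(|x - z| / 6)))
      = (fun x : ℝ => (fun y : ℝ => Real.exp (-(|y|/6))) (x - z)) from rfl]
  rw [integral_sub_right_eq_self (fun y : ℝ => Real.exp (-(|y|/6))) z]
  exact base_integral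

lemma psiZ_pos (z x : ℝ) : 0 < psiZ z x := inv_pos.2 (Real.cosh_pos _)

lemma cosh_inv_le (u : ℝ) : (Real.cosh u)⁻¹ ≤ 2 * Real.exp (-|u|) := by
  have hc : Real.exp |u| ≤ 2 * Real.cosh u := by
    rw [Real.cosh_eq]
    rcases abs_cases u with ⟨h, _⟩ | ⟨h, _⟩ <;> rw [h] <;>
      nlinarith [Real.exp_pos u, Real.exp_pos (-u)]
  have h1 : (0:ℝ) < Real.exp |u| / 2 := by positivity
  calc (Real.cosh u)⁻¹ ≤ (Real.exp |u| / 2)⁻¹ := by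
        apply inv_anti₀ h1; linarith
    _ = 2 * Real.exp (-|u|) := by rw [Real.exp_neg]; field_simp

lemma sq_le_exp (t : ℝ) (ht : 0 ≤ t) : t ^ 2 ≤ 4 * Real.exp t := by
  have h := Real.add_one_le_exp (t / 2)
  have he : Real.exp (t / 2) * Real.exp (t / 2) = Real.exp t := by
    rw [← Real.exp_add]; ring_nf
  nlinarith [Real.exp_pos (t / 2)]

lemma pow4_le_exp (t : ℝ) (ht : 0 ≤ t) : t ^ 4 ≤ 256 * Real.exp t := by
  have h := sq_le_exp (t / 2) (by linarith)
  have h2 : t ^ 2 ≤ 16 * Real.exp (t / 2) := by nlinarith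
  have he : Real.exp (t / 2) * Real.exp (t / 2) = Real.exp t := by
    rw [← Real.exp_add]; ring_nf
  nlinarith [sq_nonneg t, Real.exp_pos (t / 2),
    mul_le_mul h2 h2 (sq_nonneg t) (by positivity)]

lemma master (z x : ℝ) :
    (psiZ z x) ^ 2 * ((1 + x ^ 2)⁻¹) ^ 2
      ≤ 6000000 * Real.exp (-(|x - z| / 6)) * ((1 + z ^ 2) ^ 2)⁻¹ := by
  set u := x - z with hu
  set t := |u| / 6 with htdef
  have ht : 0 ≤ t := by positivity
  have hA : (0:ℝ) < Real.exp (-t) := Real.exp_pos _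
  have hpsi : psiZ z x ≤ 2 * Real.exp (-t) := by
    have := cosh_inv_le (u / 6)
    rw [abs_div] at this
    simp only [abs_of_nonneg (by norm_num : (0:ℝ) ≤ 6)] at this
    simpa [psiZ, htdef] using this
  have hP2 : (psiZ z x) ^ 2 ≤ 4 * Real.exp (-t) ^ 2 := by
    nlinarith [psiZ_pos z x]
  have hx0 : (0:ℝ) < 1 + x ^ 2 := by positivity
  have hz0 : (0:ℝ) < 1 + z ^ 2 := by positivity
  have hQ : (1 + x ^ 2)⁻¹ ≤ 2 * (1 + u ^ 2) * (1 + z ^ 2)⁻¹ := by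
    rw [← one_div, show (1 + z ^ 2)⁻¹ = 1 / (1 + z ^ 2) from (one_div _).symm,
      mul_one_div, div_le_div_iff₀ hx0 hz0]
    rw [hu]
    nlinarith [sq_nonneg (2 * x - z), mul_nonneg (sq_nonneg (x - z)) (sq_nonneg x)]
  have hQ2 : ((1 + x ^ 2)⁻¹) ^ 2 ≤ 4 * (1 + u ^ 2) ^ 2 * ((1 + z ^ 2)⁻¹) ^ 2 := by
    nlinarith [inv_pos.2 hx0, inv_pos.2 hz0,
      mul_nonneg (le_of_lt (inv_pos.2 hz0)) (sq_nonneg u)]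
  have hu2 : u ^ 2 = 36 * t ^ 2 := by
    rw [htdef, ← sq_abs u]; ring
  have hsum : (1 + u ^ 2) ^ 2 ≤ 332065 * Real.exp t := by
    rw [hu2]
    nlinarith [sq_le_exp t ht, pow4_le_exp t ht, Real.one_le_exp ht]
  have hme : Real.exp t * Real.exp (-t) = 1 := by
    rw [← Real.exp_add]; simp
  have hstep : (1 + u ^ 2) ^ 2 * Real.exp (-t) ≤ 332065 := by
    have := mul_le_mul_of_nonneg_right hsum (le_of_lt hA)
    calc (1 + u ^ 2) ^ 2 * Real.exp (-t) ≤ 332065 * Real.exp t * Real.exp (-t) := this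
      _ = 332065 * (Real.exp t * Real.exp (-t)) := by ring
      _ = 332065 := by rw [hme]; ring
  have hfin : (psiZ z x) ^ 2 * ((1 + x ^ 2)⁻¹) ^ 2
      ≤ 16 * ((1 + u ^ 2) ^ 2 * Real.exp (-t)) * (Real.exp (-t) * ((1 + z ^ 2)⁻¹) ^ 2) := by
    calc (psiZ z x) ^ 2 * ((1 + x ^ 2)⁻¹) ^ 2
        ≤ (4 * Real.exp (-t) ^ 2) * (4 * (1 + u ^ 2) ^ 2 * ((1 + z ^ 2)⁻¹) ^ 2) := by
          apply mul_le_mul hP2 hQ2 (sq_nonneg _) (by positivity)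
      _ = 16 * ((1 + u ^ 2) ^ 2 * Real.exp (-t)) * (Real.exp (-t) * ((1 + z ^ 2)⁻¹) ^ 2) := by
          ring
  have hlast : 16 * ((1 + u ^ 2) ^ 2 * Real.exp (-t)) * (Real.exp (-t) * ((1 + z ^ 2)⁻¹) ^ 2)
      ≤ 6000000 * (Real.exp (-t) * ((1 + z ^ 2)⁻¹) ^ 2) := by
    have hpos : (0:ℝ) ≤ Real.exp (-t) * ((1 + z ^ 2)⁻¹) ^ 2 := by positivity
    nlinarith [mul_le_mul_of_nonneg_right hstep hpos]
  have heq : 6000000 * (Real.exp (-t) * ((1 + z ^ 2)⁻¹) ^ 2)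
      = 6000000 * Real.exp (-(|x - z| / 6)) * ((1 + z ^ 2) ^ 2)⁻¹ := by
    rw [htdef, hu, inv_pow]; ring
  linarith [hfin, hlast, le_of_eq heq]

lemma inner_bound (z c : ℝ) (hc : 0 ≤ c) (F : ℝ → ℝ) (hF0 : ∀ x, 0 ≤ F x)
    (hF : ∀ x, F x ≤ c * ((psiZ z x) ^ 2 * ((1 + x ^ 2)⁻¹) ^ 2)) :
    (∫ x : ℝ, F x) ≤ 72000000 * c * ((1 + z ^ 2) ^ 2)⁻¹ := by
  have hInt : Integrable
      (fun x : ℝ => c * 6000000 * ((1 + z ^ 2) ^ 2)⁻¹ * Real.exp (-(|x - z| / 6))) :=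
    (shifted_integrable z).const_mul _
  have hmono : ∀ x, F x ≤ c * 6000000 * ((1 + z ^ 2) ^ 2)⁻¹ * Real.exp (-(|x - z| / 6)) := by
    intro x
    calc F x ≤ c * ((psiZ z x) ^ 2 * ((1 + x ^ 2)⁻¹) ^ 2) := hF x
      _ ≤ c * (6000000 * Real.exp (-(|x - z| / 6)) * ((1 + z ^ 2) ^ 2)⁻¹) :=
          mul_le_mul_of_nonneg_left (master z x) hc
      _ = c * 6000000 * ((1 + z ^ 2) ^ 2)⁻¹ * Real.exp (-(|x - z| / 6)) := by ring
  calc (∫ x : ℝ, F x)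
      ≤ ∫ x : ℝ, c * 6000000 * ((1 + z ^ 2) ^ 2)⁻¹ * Real.exp (-(|x - z| / 6)) :=
        integral_mono_of_nonneg (Filter.Eventually.of_forall hF0) hInt
          (Filter.Eventually.of_forall hmono)
    _ = c * 6000000 * ((1 + z ^ 2) ^ 2)⁻¹ * ∫ x : ℝ, Real.exp (-(|x - z| / 6)) :=
        integral_const_mul _ _
    _ = 72000000 * c * ((1 + z ^ 2) ^ 2)⁻¹ := by rw [shifted_integral z]; ring

lemma psiZ_hasDerivAt (z x : ℝ) :
    HasDerivAt (fun x => psiZ z x)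
      (-(Real.sinh ((x - z) / 6) * (1 / 6)) / Real.cosh ((x - z) / 6) ^ 2) x := by
  have hlin : HasDerivAt (fun x : ℝ => (x - z) / 6) (1 / 6) x := by
    simpa using ((hasDerivAt_id x).sub_const z).div_const 6
  have hcosh : HasDerivAt (fun x => Real.cosh ((x - z) / 6))
      (Real.sinh ((x - z) / 6) * (1 / 6)) x :=
    (Real.hasDerivAt_cosh _).comp x hlin
  exact hcosh.inv (ne_of_gt (Real.cosh_pos _))

lemma psiZ_deriv_abs_le (z x : ℝ) :
    |(-(Real.sinh ((x - z) / 6) * (1 / 6)) / Real.cosh ((x - z) / 6) ^ 2)| ≤ psiZ z x := by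
  set u := (x - z) / 6
  have hc : 0 < Real.cosh u := Real.cosh_pos _
  have hs : |Real.sinh u| ≤ Real.cosh u := by
    nlinarith [Real.cosh_sq u, abs_nonneg (Real.sinh u), sq_abs (Real.sinh u)]
  rw [abs_div, abs_neg, abs_mul]
  have h1 : |Real.sinh u| * |(1:ℝ)/6| ≤ Real.cosh u * 1 := by
    apply mul_le_mul hs (by rw [abs_of_pos]; norm_num; norm_num) (abs_nonneg _) (le_of_lt hc)
  have h2 : |Real.cosh u ^ 2| = Real.cosh u ^ 2 := abs_of_pos (by positivity)
  rw [h2]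
  rw [div_le_iff₀ (by positivity)]
  show _ ≤ (Real.cosh u)⁻¹ * Real.cosh u ^ 2
  rw [pow_two, ← mul_assoc, inv_mul_cancel₀ (ne_of_gt hc), one_mul]
  calc |Real.sinh u| * |(1:ℝ)/6| ≤ Real.cosh u * 1 := h1
    _ = Real.cosh u := mul_one _

end Auxiliary

/-- there is a constant `C` such that for every `δ ∈ (0,1]` and every `a`
with `|a(x)| + |a'(x)| ≤ δ (1+x²)⁻¹`, one has the pointwise step
`∫ |ψ_z a|² dx ≤ C δ² ⟨z⟩⁻⁴` and the conclusion `∫ ‖ψ_z a‖_{H¹} dz ≤ C δ`. -/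
theorem stmt16 :
    ∃ C > 0, ∀ δ : ℝ, 0 < δ → δ ≤ 1 → ∀ a a' : ℝ → ℝ,
      (∀ x, HasDerivAt a (a' x) x) →
      (∀ x, |a x| + |a' x| ≤ δ * (1 + x ^ 2)⁻¹) →
      (∀ z : ℝ, (∫ x : ℝ, (psiZ z x * a x) ^ 2) ≤ C * δ ^ 2 * ((1 + z ^ 2) ^ (2:ℕ))⁻¹) ∧
      (∫ z : ℝ, h1NormOf (fun x => psiZ z x * a x)
          (fun x => deriv (fun x => psiZ z x * a x) x)) ≤ C * δ := by
  refine ⟨1000000000, by norm_num, ?_⟩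
  intro δ hδ hδ1 a a' ha hbound
  have haB : ∀ x, |a x| ≤ δ * (1 + x ^ 2)⁻¹ := fun x =>
    le_trans (le_add_of_nonneg_right (abs_nonneg (a' x))) (hbound x)
  constructor
  · intro z
    have hz2 : (0:ℝ) ≤ ((1 + z ^ 2) ^ 2)⁻¹ := by positivity
    have h := inner_bound z (δ ^ 2) (by positivity) (fun x => (psiZ z x * a x) ^ 2)
      (fun x => sq_nonneg _) ?_
    · calc (∫ x : ℝ, (psiZ z x * a x) ^ 2)
          ≤ 72000000 * δ ^ 2 * ((1 + z ^ 2) ^ 2)⁻¹ := h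
        _ ≤ 1000000000 * δ ^ 2 * ((1 + z ^ 2) ^ (2:ℕ))⁻¹ := by
            nlinarith [sq_nonneg δ, hz2]
    · intro x
      have h1 : (a x) ^ 2 ≤ (δ * (1 + x ^ 2)⁻¹) ^ 2 := by
        rw [← sq_abs (a x)]; exact pow_le_pow_left₀ (abs_nonneg _) (haB x) 2
      calc (psiZ z x * a x) ^ 2 = (psiZ z x) ^ 2 * (a x) ^ 2 := by ring
        _ ≤ (psiZ z x) ^ 2 * (δ * (1 + x ^ 2)⁻¹) ^ 2 :=
            mul_le_mul_of_nonneg_left h1 (sq_nonneg _)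
        _ = δ ^ 2 * ((psiZ z x) ^ 2 * ((1 + x ^ 2)⁻¹) ^ 2) := by ring
  · have hDeriv : ∀ z x, deriv (fun x => psiZ z x * a x) x
        = (-(Real.sinh ((x - z) / 6) * (1 / 6)) / Real.cosh ((x - z) / 6) ^ 2) * a x
          + psiZ z x * a' x := fun z x => ((psiZ_hasDerivAt z x).mul (ha x)).deriv
    have houter : ∀ z : ℝ, h1NormOf (fun x => psiZ z x * a x)
        (fun x => deriv (fun x => psiZ z x * a x) x) ≤ 12000 * δ * (1 + z ^ 2)⁻¹ := by
      intro z
      have hI : (∫ x : ℝ, ((psiZ z x * a x) ^ 2 + (deriv (fun x => psiZ z x * a x) x) ^ 2))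
          ≤ 72000000 * (2 * δ ^ 2) * ((1 + z ^ 2) ^ 2)⁻¹ := by
        apply inner_bound z (2 * δ ^ 2) (by positivity) _ (fun x => by positivity)
        intro x
        have hψ := psiZ_pos z x
        have hg : |psiZ z x * a x| ≤ psiZ z x * (δ * (1 + x ^ 2)⁻¹) := by
          rw [abs_mul, abs_of_pos hψ]
          exact mul_le_mul_of_nonneg_left (haB x) (le_of_lt hψ)
        have hg' : |deriv (fun x => psiZ z x * a x) x| ≤ psiZ z x * (δ * (1 + x ^ 2)⁻¹) := by
          rw [hDeriv z x]
          have hd := psiZ_deriv_abs_le z x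
          calc |(-(Real.sinh ((x - z) / 6) * (1 / 6)) / Real.cosh ((x - z) / 6) ^ 2) * a x
                + psiZ z x * a' x|
              ≤ |(-(Real.sinh ((x - z) / 6) * (1 / 6)) / Real.cosh ((x - z) / 6) ^ 2) * a x|
                + |psiZ z x * a' x| := abs_add_le _ _
            _ = |(-(Real.sinh ((x - z) / 6) * (1 / 6)) / Real.cosh ((x - z) / 6) ^ 2)| * |a x|
                + psiZ z x * |a' x| := by rw [abs_mul, abs_mul, abs_of_pos hψ]
            _ ≤ psiZ z x * |a x| + psiZ z x * |a' x| := by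
                have := mul_le_mul_of_nonneg_right hd (abs_nonneg (a x))
                linarith
            _ = psiZ z x * (|a x| + |a' x|) := by ring
            _ ≤ psiZ z x * (δ * (1 + x ^ 2)⁻¹) :=
                mul_le_mul_of_nonneg_left (hbound x) (le_of_lt hψ)
        have h1 : (psiZ z x * a x) ^ 2 ≤ (psiZ z x * (δ * (1 + x ^ 2)⁻¹)) ^ 2 := by
          rw [← sq_abs]; exact pow_le_pow_left₀ (abs_nonneg _) hg 2
        have h2 : (deriv (fun x => psiZ z x * a x) x) ^ 2
            ≤ (psiZ z x * (δ * (1 + x ^ 2)⁻¹)) ^ 2 := by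
          rw [← sq_abs]; exact pow_le_pow_left₀ (abs_nonneg _) hg' 2
        calc (psiZ z x * a x) ^ 2 + (deriv (fun x => psiZ z x * a x) x) ^ 2
            ≤ 2 * (psiZ z x * (δ * (1 + x ^ 2)⁻¹)) ^ 2 := by linarith
          _ = (2 * δ ^ 2) * ((psiZ z x) ^ 2 * ((1 + x ^ 2)⁻¹) ^ 2) := by ring
      have heq : 72000000 * (2 * δ ^ 2) * ((1 + z ^ 2) ^ 2)⁻¹
          = (12000 * δ * (1 + z ^ 2)⁻¹) ^ 2 := by rw [← inv_pow]; ring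
      calc h1NormOf (fun x => psiZ z x * a x)
            (fun x => deriv (fun x => psiZ z x * a x) x)
          = Real.sqrt (∫ x : ℝ,
              ((psiZ z x * a x) ^ 2 + (deriv (fun x => psiZ z x * a x) x) ^ 2)) := rfl
        _ ≤ Real.sqrt ((12000 * δ * (1 + z ^ 2)⁻¹) ^ 2) :=
            Real.sqrt_le_sqrt (by rw [← heq]; exact hI)
        _ = 12000 * δ * (1 + z ^ 2)⁻¹ := Real.sqrt_sq (by positivity)
    have hIntOuter : Integrable (fun z : ℝ => 12000 * δ * (1 + z ^ 2)⁻¹) :=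
      integrable_inv_one_add_sq.const_mul _
    calc (∫ z : ℝ, h1NormOf (fun x => psiZ z x * a x)
            (fun x => deriv (fun x => psiZ z x * a x) x))
        ≤ ∫ z : ℝ, 12000 * δ * (1 + z ^ 2)⁻¹ :=
          integral_mono_of_nonneg
            (Filter.Eventually.of_forall fun z => Real.sqrt_nonneg _) hIntOuter
            (Filter.Eventually.of_forall houter)
      _ = 12000 * δ * Real.pi := by rw [integral_const_mul, integral_univ_inv_one_add_sq]
      _ ≤ 1000000000 * δ := by nlinarith [Real.pi_le_four, hδ]
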